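/- Let Q(·) be a quasigroup which is isotopic to a D-loop Q(∘), i.e., there exist bijections α, β, γ of Q with γ(x·y) = α(x)∘β(y) for all x, y. Then there exist a permutation σ of Q and an element p ∈ Q such that φ_p ∘ φ_i⁻¹ ∘ φ_p = φ_{σ(i)} for every i ∈ Q, where (φ_i) are the tracks of Q(·). -/

import Mathlib

/-- If a quasigroup `Q(·)` with tracks `φ` is isotopic to a
D-loop `Q(∘)` (via bijections `α, β, γ` with `γ(x·y) = α(x) ∘ β(y)`), then
there are a permutation `σ` of `Q` and `p ∈ Q` with
`φ_p ∘ φ_i⁻¹ ∘ φ_p = φ_{σ(i)}` for every `i ∈ Q`. -/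
theorem stmt_16 {Q : Type*} (mul : Q → Q → Q)
    (hL : ∀ a, Function.Bijective (fun x => mul a x))
    (hR : ∀ a, Function.Bijective (fun x => mul x a))
    (φ : Q → Equiv.Perm Q) (hφ : ∀ a x, mul x (φ a x) = a)
    (op : Q → Q → Q) (oneo : Q)
    (hopone_l : ∀ x, op oneo x = x) (hopone_r : ∀ x, op x oneo = x)
    (hopL : ∀ c, Function.Bijective (fun x => op c x))
    (hopR : ∀ c, Function.Bijective (fun x => op x c))
    (rinvo : Q → Q) (hrinvo : ∀ a, op a (rinvo a) = oneo)
    (hD : ∀ x y, rinvo (op x y) = op (rinvo y) (rinvo x))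
    (α β γ : Q → Q)
    (hα : Function.Bijective α) (hβ : Function.Bijective β)
    (hγ : Function.Bijective γ)
    (hiso : ∀ x y, γ (mul x y) = op (α x) (β y)) :
    ∃ (σ : Q → Q) (p : Q), Function.Bijective σ ∧
      ∀ i, φ p * (φ i)⁻¹ * φ p = φ (σ i) := by
  -- rinvo oneo = oneo
  have hro : rinvo oneo = oneo := by
    have := hrinvo oneo
    rwa [hopone_l] at this
  -- rinvo is an involution
  have hinv : ∀ a, rinvo (rinvo a) = a := by
    intro a
    have h1 : rinvo (op a (rinvo a)) = op (rinvo (rinvo a)) (rinvo a) := hD a (rinvo a)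
    rw [hrinvo, hro] at h1
    have h2 : op (rinvo (rinvo a)) (rinvo a) = op a (rinvo a) := by
      rw [← h1, hrinvo]
    exact (hopR (rinvo a)).1 h2
  -- right inverse is unique
  have runiq : ∀ a b, op a b = oneo → b = rinvo a := by
    intro a b h
    exact (hopL a).1 (h.trans (hrinvo a).symm)
  -- track uniqueness
  have tuniq : ∀ a x y, mul x y = a → y = φ a x := by
    intro a x y h
    exact (hL x).1 (h.trans (hφ a x).symm)
  set γe := Equiv.ofBijective γ hγ with hγe
  refine ⟨fun i => γe.symm (rinvo (γ i)), γe.symm oneo, ?_, ?_⟩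
  · have hrb : Function.Bijective rinvo := Function.Involutive.bijective hinv
    exact (γe.symm.bijective.comp hrb).comp hγ
  · intro i
    ext x
    simp only [Equiv.Perm.mul_apply]
    set u := φ (γe.symm oneo) x with hu
    set v := (φ i)⁻¹ u with hv
    set w := φ (γe.symm oneo) v with hw
    -- mul x u = p
    have hxu : mul x u = γe.symm oneo := hφ _ x
    have hvw : mul v w = γe.symm oneo := hφ _ v
    have hvu : mul v u = i := by
      have h := hφ i v
      rw [hv, show (φ i) ((φ i)⁻¹ u) = u from (φ i).apply_symm_apply u] at h
      rw [hv]; exact h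
    have hγp : γ (γe.symm oneo) = oneo := γe.apply_symm_apply oneo
    have h1 : β u = rinvo (α x) := by
      apply runiq
      rw [← hiso, hxu, hγp]
    have h2 : β w = rinvo (α v) := by
      apply runiq
      rw [← hiso, hvw, hγp]
    have h3 : op (α v) (β u) = γ i := by rw [← hiso, hvu]
    have key : γ (mul x w) = rinvo (γ i) := by
      rw [hiso, h2, ← h3, h1, hD, hinv]
    -- conclude
    apply tuniq
    apply hγ.1
    rw [key]; exact (γe.apply_symm_apply _).symm
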